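/- Let λ ∈ ℂ with λ ≠ 0 and λ ≠ 1. Then B_0(λ) = (Log λ/(λ − 1))·H_0(λ⁻¹), and for every integer n ≥ 1, B_n(λ) = (Log λ/(λ − 1))·H_n(λ⁻¹) + (n/(λ − 1))·H_{n−1}(λ⁻¹). -/

import Mathlib

/-- The λ-Bernoulli numbers `B_n(λ)`, defined by `B_0(λ) = Log λ / (λ - 1)` and, for `n ≥ 1`,
by the recurrence `λ·∑_{k=0}^{n} C(n,k)·B_k(λ) - B_n(λ) = (1 if n = 1, 0 if n ≥ 2)`,
encoding the generating function `(Log λ + t)/(λ e^t - 1) = ∑ B_n(λ) t^n/n!`. -/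
noncomputable def lambdaBernoulli (lam : ℂ) : ℕ → ℂ
  | 0 => Complex.log lam / (lam - 1)
  | n + 1 =>
      ((if n = 0 then (1 : ℂ) else 0) -
        lam * ∑ k : Fin (n + 1), ((n + 1).choose (k : ℕ) : ℂ) * lambdaBernoulli lam k) / (lam - 1)

/-- The Frobenius–Euler numbers `H_n(u)`, defined by `H_0(u) = 1` and, for `n ≥ 1`, by the
recurrence `∑_{k=0}^{n} C(n,k)·H_k(u) = u·H_n(u)`, encoding the generating function
`(1 - u)/(e^t - u) = ∑ H_n(u) t^n/n!`. -/
noncomputable def frobeniusEuler (u : ℂ) : ℕ → ℂ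
  | 0 => 1
  | n + 1 => (∑ k : Fin (n + 1), ((n + 1).choose (k : ℕ) : ℂ) * frobeniusEuler u k) / (u - 1)

lemma frob_rec (u : ℂ) (hu : u - 1 ≠ 0) (n : ℕ) :
    ∑ k : Fin (n + 1), ((n + 1).choose (k : ℕ) : ℂ) * frobeniusEuler u k
      = (u - 1) * frobeniusEuler u (n + 1) := by
  rw [frobeniusEuler]
  field_simp

lemma reindex (u : ℂ) (n : ℕ) :
    ∑ k : Fin (n + 1), ((n + 1).choose (k : ℕ) : ℂ) * (k : ℕ) * frobeniusEuler u ((k : ℕ) - 1)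
      = (n + 1 : ℂ) * ∑ j : Fin n, (n.choose (j : ℕ) : ℂ) * frobeniusEuler u (j : ℕ) := by
  rw [Fin.sum_univ_succ, Finset.mul_sum]
  simp only [Fin.val_zero, Nat.cast_zero, mul_zero, zero_mul, zero_add, Fin.val_succ,
    Nat.add_sub_cancel]
  refine Finset.sum_congr rfl fun j _ => ?_
  have h := Nat.add_one_mul_choose_eq n (j : ℕ)
  have : (((n + 1).choose ((j : ℕ) + 1) * ((j : ℕ) + 1) : ℕ) : ℂ)
      = (((n + 1) * n.choose (j : ℕ) : ℕ) : ℂ) := by rw [← h]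
  push_cast at this
  push_cast
  linear_combination frobeniusEuler u (j : ℕ) * this

lemma key (lam : ℂ) (h0 : lam ≠ 0) (h1 : lam ≠ 1) (n : ℕ) :
    lambdaBernoulli lam n =
      Complex.log lam / (lam - 1) * frobeniusEuler lam⁻¹ n +
        (n : ℂ) / (lam - 1) * frobeniusEuler lam⁻¹ (n - 1) := by
  have hc : lam - 1 ≠ 0 := sub_ne_zero.mpr h1
  have hu : lam⁻¹ - 1 ≠ 0 := sub_ne_zero.mpr (by simp [inv_eq_one, h1])
  have hli : lam * lam⁻¹ = 1 := mul_inv_cancel₀ h0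
  have hc' : (1 : ℂ) - lam ≠ 0 := sub_ne_zero.mpr (Ne.symm h1)
  induction n using Nat.strong_induction_on with
  | _ n ih =>
    match n with
    | 0 => simp [lambdaBernoulli, frobeniusEuler]
    | Nat.succ n =>
      rw [lambdaBernoulli]
      have hS : ∑ k : Fin (n + 1), ((n + 1).choose (k : ℕ) : ℂ) * lambdaBernoulli lam k
          = Complex.log lam / (lam - 1) * ((lam⁻¹ - 1) * frobeniusEuler lam⁻¹ (n + 1))
            + (1 / (lam - 1)) * ((n + 1 : ℂ) * ∑ j : Fin n, (n.choose (j : ℕ) : ℂ) * frobeniusEuler lam⁻¹ (j : ℕ)) := by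
        rw [← frob_rec lam⁻¹ hu n, ← reindex lam⁻¹ n, Finset.mul_sum, Finset.mul_sum,
          ← Finset.sum_add_distrib]
        refine Finset.sum_congr rfl fun k _ => ?_
        rw [ih (k : ℕ) k.isLt]
        ring
      rw [hS]
      match n with
      | 0 =>
        simp only [Nat.add_sub_cancel]
        simp [frobeniusEuler]
        field_simp
        ring
      | Nat.succ m =>
        rw [frob_rec lam⁻¹ hu m]
        simp only [Nat.add_sub_cancel, if_neg (Nat.succ_ne_zero m)]
        simp only [Nat.succ_eq_add_one, Nat.add_sub_cancel]
        field_simp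
        push_cast
        ring

/-- For `λ ∈ ℂ`, `λ ≠ 0`, `λ ≠ 1`, one has
`B_0(λ) = (Log λ/(λ - 1))·H_0(λ⁻¹)` and, for all `n ≥ 1`,
`B_n(λ) = (Log λ/(λ - 1))·H_n(λ⁻¹) + (n/(λ - 1))·H_{n-1}(λ⁻¹)`. -/
theorem lambdaBernoulli_eq_frobeniusEuler (lam : ℂ) (h0 : lam ≠ 0) (h1 : lam ≠ 1) :
    lambdaBernoulli lam 0 = Complex.log lam / (lam - 1) * frobeniusEuler lam⁻¹ 0 ∧
    ∀ n : ℕ, 1 ≤ n →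
      lambdaBernoulli lam n =
        Complex.log lam / (lam - 1) * frobeniusEuler lam⁻¹ n +
          (n : ℂ) / (lam - 1) * frobeniusEuler lam⁻¹ (n - 1) := by
  constructor
  · simpa using key lam h0 h1 0
  · intro n _; exact key lam h0 h1 n
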